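/- The permutation module B over the group algebra K[G] satisfies the right Frobenius module equations: for all x ∈ X and h ∈ G, δ_B(x·h) = (μ_B ⊗ id)(x ⊗ Δ(h)) and δ_B(x·h) = (id ⊗ μ)(δ_B(x) ⊗ h) (modulo associators), where μ is multiplication in K[G], Δ(h) = Σ_{y ∈ G} y ⊗ (y⁻¹h), μ_B is the right action, and δ_B is the coaction; equivalently δ_B ∘ μ_B = (μ_B ⊗ id) ∘ (id_B ⊗ Δ) = (id_B ⊗ μ) ∘ (δ_B ⊗ id) as linear maps B ⊗ K[G] → B ⊗ K[G]. -/

import Mathlib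

open TensorProduct

set_option synthInstance.maxHeartbeats 1000000 in
/-- The permutation module `B = (X →₀ K)` of a finite right `G`-set `X` satisfies the
right Frobenius module equations
`δ_B ∘ μ_B = (μ_B ⊗ id) ∘ (id ⊗ Δ) = (id ⊗ μ) ∘ (δ_B ⊗ id)` over the group algebra
`K[G]` with comultiplication `Δ(g) = Σ_y y ⊗ y⁻¹g`. -/
theorem permutation_module_frobenius
    (K G X : Type*) [Field K] [Group G] [Fintype G] [Fintype X]
    (act : X → G → X)
    (act_one : ∀ x : X, act x 1 = x)
    (act_mul : ∀ (x : X) (g h : G), act x (g * h) = act (act x g) h)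
    (Δ : MonoidAlgebra K G →ₗ[K] MonoidAlgebra K G ⊗[K] MonoidAlgebra K G)
    (hΔ : ∀ g : G,
      Δ (MonoidAlgebra.single g 1) =
        ∑ y : G,
          MonoidAlgebra.single y (1 : K) ⊗ₜ[K]
            MonoidAlgebra.single (y⁻¹ * g) (1 : K))
    (μB : (X →₀ K) ⊗[K] MonoidAlgebra K G →ₗ[K] (X →₀ K))
    (hμB : ∀ (x : X) (g : G),
      μB (Finsupp.single x 1 ⊗ₜ[K] MonoidAlgebra.single g 1) =
        Finsupp.single (act x g) 1)
    (δB : (X →₀ K) →ₗ[K] (X →₀ K) ⊗[K] MonoidAlgebra K G)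
    (hδB : ∀ x : X,
      δB (Finsupp.single x 1) =
        ∑ g : G,
          Finsupp.single (act x g⁻¹) (1 : K) ⊗ₜ[K]
            MonoidAlgebra.single g (1 : K)) :
    δB ∘ₗ μB =
        TensorProduct.map μB LinearMap.id ∘ₗ
          (TensorProduct.assoc K (X →₀ K) (MonoidAlgebra K G)
              (MonoidAlgebra K G)).symm.toLinearMap ∘ₗ
            TensorProduct.map LinearMap.id Δ ∧
      δB ∘ₗ μB =
        TensorProduct.map LinearMap.id (LinearMap.mul' K (MonoidAlgebra K G)) ∘ₗ
          (TensorProduct.assoc K (X →₀ K) (MonoidAlgebra K G)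
              (MonoidAlgebra K G)).toLinearMap ∘ₗ
            TensorProduct.map δB LinearMap.id := by
  constructor
  · ext x g
    simp only [AlgebraTensorModule.curry_apply, curry_apply, LinearMap.coe_restrictScalars,
      LinearMap.coe_comp, Function.comp_apply, TensorProduct.map_tmul, LinearMap.id_coe, id_eq,
      Finsupp.lsingle_apply, MonoidAlgebra.lsingle_apply, hμB, hδB, hΔ, tmul_sum, map_sum,
      LinearEquiv.coe_coe, assoc_symm_tmul]
    have h := map_sum ((TensorProduct.assoc K (X →₀ K) (MonoidAlgebra K G)
        (MonoidAlgebra K G)).symm.toLinearMap)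
      (f := fun a : G => (Finsupp.single x 1 : X →₀ K) ⊗ₜ[K]
        (MonoidAlgebra.single a (1:K) ⊗ₜ[K] MonoidAlgebra.single (a⁻¹*g) (1:K)))
      (s := Finset.univ)
    simp only [LinearEquiv.coe_coe] at h
    apply Fintype.sum_equiv ((Equiv.inv G).trans (Equiv.mulLeft g))
    intro y
    simp [← act_mul, mul_assoc]
  · ext x g
    simp only [AlgebraTensorModule.curry_apply, curry_apply, LinearMap.coe_restrictScalars,
      LinearMap.coe_comp, Function.comp_apply, TensorProduct.map_tmul, LinearMap.id_coe, id_eq,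
      Finsupp.lsingle_apply, MonoidAlgebra.lsingle_apply, hμB, hδB, hΔ, sum_tmul, map_sum,
      LinearEquiv.coe_coe, assoc_tmul]
    simp only [LinearMap.mul'_apply, MonoidAlgebra.single_mul_single, one_mul]
    apply Fintype.sum_equiv (Equiv.mulRight g⁻¹)
    intro y
    simp [← act_mul, mul_inv_rev, mul_assoc]
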